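/- arXiv:2402.08357 — 2 statements merged into one kernel-verified Lean document; each statement's English description precedes it below -/
import Mathlib

section
/- Let p be a prime, let F be a finite field of characteristic p, let S = SL₂(F), and let H be a Sylow p-subgroup of S. Then for all pairwise distinct conjugates H₁, H₂, H₃ of H in S, the intersection of H₁ with the set product H₂H₃ = {h₂h₃ : h₂ ∈ H₂, h₃ ∈ H₃} is {1}. -/
/-- `I` and `J` are `r`-related under the action of `G`. -/
def Related (G : Type*) {Ω : Type*} [Group G] [MulAction G Ω] {n : ℕ} (r : ℕ)
    (I J : Fin n → Ω) : Prop :=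
  ∀ k : Fin r → Fin n, StrictMono k → ∃ g : G, ∀ i, g • I (k i) = J (k i)

/-- The action of `G` on `Ω` is binary. -/
def IsBinary (G Ω : Type*) [Group G] [MulAction G Ω] : Prop :=
  ∀ n : ℕ, 2 ≤ n → ∀ I J : Fin n → Ω, Related G 2 I J → Related G n I J

/-- The graph `Γ(D)` associated to a subset `D` of a group. -/
def classGraph {G : Type*} [Group G] (D : Set G) : SimpleGraph G where
  Adj g h := g ≠ h ∧ g ∈ D ∧ h ∈ D ∧ Commute g h ∧ (g * h⁻¹ ∈ D ∨ h * g⁻¹ ∈ D)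
  symm := ⟨by
    rintro g h ⟨hne, hg, hh, hc, hd⟩
    exact ⟨hne.symm, hh, hg, hc.symm, hd.symm⟩⟩
  loopless := ⟨by rintro g ⟨hne, -⟩; exact hne rfl⟩

/-- `Δ(g, D)`: the subgroup generated by the vertices in the connected component
of `Γ(D)` containing `g`. -/
def Delta {G : Type*} [Group G] (g : G) (D : Set G) : Subgroup G :=
  Subgroup.closure {h | h ∈ D ∧ (classGraph D).Reachable g h}

/-- The component group `Δ(g)` of `g` : here `D` is the conjugacy class of `g`. -/
def DeltaC {G : Type*} [Group G] (g : G) : Subgroup G :=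
  Delta g {x | IsConj g x}

/-- `D` is a union of conjugacy classes. -/
def IsUnionConjClasses {G : Type*} [Group G] (D : Set G) : Prop :=
  ∀ x ∈ D, ∀ y : G, IsConj x y → y ∈ D

/-- The fixity of `g` acting on `Ω`: the number of fixed points of `g`. -/
noncomputable def fixity (G Ω : Type*) [Group G] [MulAction G Ω] (g : G) : ℕ :=
  Nat.card (MulAction.fixedBy Ω g)

/-- `g` is an element of order `p` of maximal `p`-fixity. -/
def MaxPFixity (G Ω : Type*) [Group G] [MulAction G Ω] (p : ℕ) (g : G) : Prop :=
  orderOf g = p ∧ ∀ h : G, orderOf h = p → fixity G Ω h ≤ fixity G Ω g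

/-- The ascending sequence of unions of conjugacy classes `D_1 = D`,
`D_{i+1}` = union of the conjugacy classes of elements of order `p`
meeting `Δ(g, D_i)`. -/
def DSeq {G : Type*} [Group G] (g : G) (D : Set G) (p : ℕ) : ℕ → Set G
  | 0 => D
  | i + 1 => {x : G | orderOf x = p ∧ ∃ y ∈ Delta g (DSeq g D p i), IsConj x y}

/-- `Δ_∞(g, D)`: the union of the chain `Δ(g, D_1) ≤ Δ(g, D_2) ≤ ⋯`. -/
def DeltaInf {G : Type*} [Group G] (g : G) (D : Set G) (p : ℕ) : Subgroup G :=
  ⨆ i : ℕ, Delta g (DSeq g D p i)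

/-- The terminal component group `Δ_∞(g)` of an element `g` of order `p`. -/
def DeltaInfC {G : Type*} [Group G] (g : G) (p : ℕ) : Subgroup G :=
  DeltaInf g {x | IsConj g x} p



namespace Stmt15Aux

open Matrix

variable {F : Type*} [Field F]

/-- The standard unipotent matrix. -/
def uu (F : Type*) [Field F] (t : F) : Matrix.SpecialLinearGroup (Fin 2) F :=
  ⟨!![1, t; 0, 1], by simp [Matrix.det_fin_two_of]⟩

@[simp] lemma uu_coe (t : F) :
    ((uu F t : Matrix.SpecialLinearGroup (Fin 2) F) : Matrix (Fin 2) (Fin 2) F)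
      = !![1, t; 0, 1] := rfl

lemma uu_mul (t s : F) : uu F t * uu F s = uu F (t + s) := by
  apply Subtype.ext
  simp only [Matrix.SpecialLinearGroup.coe_mul, uu_coe]
  ext i j
  fin_cases i <;> fin_cases j <;>
    · simp [Matrix.mul_apply, Fin.sum_univ_two]; try ring

lemma uu_zero : uu F 0 = 1 := by
  apply Subtype.ext
  simp only [uu_coe, Matrix.SpecialLinearGroup.coe_one, Matrix.one_fin_two]

lemma uu_inv (t : F) : (uu F t)⁻¹ = uu F (-t) := by
  apply inv_eq_of_mul_eq_one_right
  rw [uu_mul, add_neg_cancel, uu_zero]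

/-- The subgroup of upper unitriangular matrices. -/
def U (F : Type*) [Field F] : Subgroup (Matrix.SpecialLinearGroup (Fin 2) F) where
  carrier := Set.range (uu F)
  mul_mem' := by rintro x y ⟨t, rfl⟩ ⟨s, rfl⟩; exact ⟨t + s, (uu_mul t s).symm⟩
  one_mem' := ⟨0, uu_zero⟩
  inv_mem' := by rintro x ⟨t, rfl⟩; exact ⟨-t, (uu_inv t).symm⟩

lemma mem_U_iff {x : Matrix.SpecialLinearGroup (Fin 2) F} :
    x ∈ U F ↔ ∃ t, uu F t = x := Iff.rfl

lemma uu_pow (t : F) (n : ℕ) : uu F t ^ n = uu F (n * t) := by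
  induction n with
  | zero => simp [uu_zero]
  | succ n ih =>
    rw [pow_succ, ih, uu_mul]
    congr 1
    push_cast
    ring

lemma isPGroup_U (p : ℕ) (hp : p.Prime) [CharP F p] : IsPGroup p (U F) := by
  rintro ⟨x, t, rfl⟩
  refine ⟨1, ?_⟩
  apply Subtype.ext
  push_cast
  rw [pow_one, uu_pow, CharP.cast_eq_zero F p, zero_mul, uu_zero]


lemma CH2 (n00 n01 n10 n11 : F) (hdet : n00 * n11 - n01 * n10 = 0) :
    !![n00, n01; n10, n11] * !![n00, n01; n10, n11]
      = (n00 + n11) • !![n00, n01; n10, n11] := by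
  ext i j
  fin_cases i <;> fin_cases j <;>
    · simp [Matrix.mul_apply, Fin.sum_univ_two, Matrix.smul_apply, smul_eq_mul]
      first
      | linear_combination (-1 : F) * hdet
      | ring

lemma trace_eq_two {p : ℕ} [Fact p.Prime] [CharP F p]
    (x : Matrix.SpecialLinearGroup (Fin 2) F) (k : ℕ) (hx : x ^ p ^ k = 1) :
    (x : Matrix (Fin 2) (Fin 2) F) 0 0 + (x : Matrix (Fin 2) (Fin 2) F) 1 1 = 2 := by
  have hp : Fact p.Prime := inferInstance
  haveI : Nonempty (Fin 2) := ⟨0⟩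
  set M : Matrix (Fin 2) (Fin 2) F := (x : Matrix (Fin 2) (Fin 2) F) with hM
  have hMpow : M ^ p ^ k = 1 := by
    rw [hM, ← Matrix.SpecialLinearGroup.coe_pow, hx, Matrix.SpecialLinearGroup.coe_one]
  set N : Matrix (Fin 2) (Fin 2) F := M - 1 with hN
  have hNpow : N ^ p ^ k = 0 := by
    rw [hN, sub_pow_char_pow_of_commute p k (Commute.one_right M), hMpow, one_pow, sub_self]
  have hdet : N.det = 0 := by
    have h2 : N.det ^ p ^ k = 0 := by rw [← Matrix.det_pow, hNpow]; simp
    exact pow_eq_zero_iff (pow_ne_zero k hp.out.ne_zero) |>.mp h2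
  rw [Matrix.det_fin_two] at hdet
  have heta : N = !![N 0 0, N 0 1; N 1 0, N 1 1] := Matrix.eta_fin_two N
  have hCH : N * N = (N 0 0 + N 1 1) • N := by
    conv_lhs => rw [heta]
    conv_rhs => rw [heta]
    exact CH2 _ _ _ _ hdet
  have hpows : ∀ m : ℕ, N ^ (m + 1) = (N 0 0 + N 1 1) ^ m • N := by
    intro m
    induction m with
    | zero => simp
    | succ m ih =>
      rw [pow_succ, ih, Matrix.smul_mul, hCH, smul_smul, pow_succ]
  have ht0 : N 0 0 + N 1 1 = 0 := by
    rcases eq_or_ne N 0 with h0 | h0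
    · rw [h0]; simp
    · have hk1 : p ^ k = (p ^ k - 1) + 1 :=
        (Nat.sub_add_cancel (Nat.one_le_pow k p hp.out.pos)).symm
      have h3 := hpows (p ^ k - 1)
      rw [← hk1, hNpow] at h3
      rcases smul_eq_zero.mp h3.symm with h | h
      · rcases eq_or_ne (p ^ k - 1) 0 with hz | hz
        · rw [hz, pow_zero] at h; exact absurd h one_ne_zero
        · exact pow_eq_zero_iff hz |>.mp h
      · exact absurd h h0
  have h00 : N 0 0 = M 0 0 - 1 := by
    rw [hN]; simp [Matrix.sub_apply, Matrix.one_apply]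
  have h11 : N 1 1 = M 1 1 - 1 := by
    rw [hN]; simp [Matrix.sub_apply, Matrix.one_apply]
  rw [h00, h11] at ht0
  linear_combination ht0

lemma le_U {p : ℕ} [Fact p.Prime] [CharP F p]
    (Q : Subgroup (Matrix.SpecialLinearGroup (Fin 2) F))
    (hQ : IsPGroup p Q) (hUQ : U F ≤ Q) : Q ≤ U F := by
  intro x hx
  obtain ⟨k, hk⟩ := hQ ⟨x, hx⟩
  have hxpow : x ^ p ^ k = 1 := by
    have := congrArg (Subgroup.subtype Q) hk
    simpa using this
  have htr := trace_eq_two x k hxpow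
  set M : Matrix (Fin 2) (Fin 2) F := (x : Matrix (Fin 2) (Fin 2) F) with hM
  have hy : x * uu F 1 ∈ Q := Q.mul_mem hx (hUQ ⟨1, rfl⟩)
  obtain ⟨k', hk'⟩ := hQ ⟨x * uu F 1, hy⟩
  have hypow : (x * uu F 1) ^ p ^ k' = 1 := by
    have := congrArg (Subgroup.subtype Q) hk'
    simpa using this
  have htr' := trace_eq_two (x * uu F 1) k' hypow
  have hyco : ((x * uu F 1 : Matrix.SpecialLinearGroup (Fin 2) F) :
      Matrix (Fin 2) (Fin 2) F) = M * !![1, (1:F); 0, 1] := by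
    rw [Matrix.SpecialLinearGroup.coe_mul, uu_coe]
  rw [hyco] at htr'
  simp [Matrix.mul_apply, Fin.sum_univ_two] at htr'
  have hdet : M 0 0 * M 1 1 - M 0 1 * M 1 0 = 1 := by
    have := x.prop
    rwa [Matrix.det_fin_two] at this
  have h10 : M 1 0 = 0 := by linear_combination htr' - htr
  have h00 : M 0 0 = 1 := by
    have hsq : (M 0 0 - 1) ^ 2 = 0 := by
      linear_combination M 0 0 * htr - hdet - M 0 1 * h10
    have h4 := pow_eq_zero_iff (two_ne_zero) |>.mp hsq
    linear_combination h4
  have h11 : M 1 1 = 1 := by linear_combination htr - h00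
  refine ⟨M 0 1, ?_⟩
  apply Subtype.ext
  rw [uu_coe, ← hM]
  conv_rhs => rw [Matrix.eta_fin_two M]
  rw [h00, h10, h11]
/-- The upper unitriangular subgroup as a Sylow p-subgroup. -/
def USylow (F : Type*) [Field F] (p : ℕ) [Fact p.Prime] [CharP F p] :
    Sylow p (Matrix.SpecialLinearGroup (Fin 2) F) :=
  ⟨U F, isPGroup_U p Fact.out, fun hQ hle => le_antisymm (le_U _ hQ hle) hle⟩


lemma conj_uu (MM : Matrix.SpecialLinearGroup (Fin 2) F)
    (h10 : (MM : Matrix (Fin 2) (Fin 2) F) 1 0 = 0) (t : F) :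
    MM * uu F t * MM⁻¹ = uu F (((MM : Matrix (Fin 2) (Fin 2) F) 0 0) ^ 2 * t) := by
  have hdet : (MM : Matrix (Fin 2) (Fin 2) F) 0 0 * (MM : Matrix (Fin 2) (Fin 2) F) 1 1
      - (MM : Matrix (Fin 2) (Fin 2) F) 0 1 * (MM : Matrix (Fin 2) (Fin 2) F) 1 0 = 1 := by
    have := MM.prop
    rwa [Matrix.det_fin_two] at this
  apply Subtype.ext
  have heta : (MM : Matrix (Fin 2) (Fin 2) F)
      = !![(MM : Matrix (Fin 2) (Fin 2) F) 0 0, (MM : Matrix (Fin 2) (Fin 2) F) 0 1;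
          (MM : Matrix (Fin 2) (Fin 2) F) 1 0, (MM : Matrix (Fin 2) (Fin 2) F) 1 1] :=
    Matrix.eta_fin_two _
  have hinv : ((MM⁻¹ : Matrix.SpecialLinearGroup (Fin 2) F) : Matrix (Fin 2) (Fin 2) F)
      = !![(MM : Matrix (Fin 2) (Fin 2) F) 1 1, -(MM : Matrix (Fin 2) (Fin 2) F) 0 1;
          -(MM : Matrix (Fin 2) (Fin 2) F) 1 0, (MM : Matrix (Fin 2) (Fin 2) F) 0 0] := by
    rw [Matrix.SpecialLinearGroup.coe_inv]
    conv_lhs => rw [heta]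
    rw [Matrix.adjugate_fin_two_of]
  rw [Matrix.SpecialLinearGroup.coe_mul, Matrix.SpecialLinearGroup.coe_mul, hinv, uu_coe, uu_coe]
  conv_lhs => rw [heta]
  ext i j
  fin_cases i <;> fin_cases j <;>
    · simp [Matrix.mul_apply, Fin.sum_univ_two]
      first
      | linear_combination hdet - ((MM : Matrix (Fin 2) (Fin 2) F) 0 0 * t) * h10
      | linear_combination hdet + t * (MM : Matrix (Fin 2) (Fin 2) F) 0 0 * h10
      | linear_combination (-((MM : Matrix (Fin 2) (Fin 2) F) 1 0) * t) * h10
      | linear_combination h10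
      | linear_combination hdet
      | ring

lemma conj_U_eq (MM : Matrix.SpecialLinearGroup (Fin 2) F)
    (h10 : (MM : Matrix (Fin 2) (Fin 2) F) 1 0 = 0) :
    (U F).map (MulAut.conj MM).toMonoidHom = U F := by
  have hdet : (MM : Matrix (Fin 2) (Fin 2) F) 0 0 * (MM : Matrix (Fin 2) (Fin 2) F) 1 1
      - (MM : Matrix (Fin 2) (Fin 2) F) 0 1 * (MM : Matrix (Fin 2) (Fin 2) F) 1 0 = 1 := by
    have := MM.prop
    rwa [Matrix.det_fin_two] at this
  rw [h10, mul_zero, sub_zero] at hdet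
  have he : (MM : Matrix (Fin 2) (Fin 2) F) 0 0 ≠ 0 := left_ne_zero_of_mul_eq_one hdet
  ext x
  simp only [Subgroup.mem_map, mem_U_iff, MulEquiv.coe_toMonoidHom, MulAut.conj_apply]
  constructor
  · rintro ⟨y, ⟨t, rfl⟩, rfl⟩
    exact ⟨((MM : Matrix (Fin 2) (Fin 2) F) 0 0) ^ 2 * t, (conj_uu MM h10 t).symm⟩
  · rintro ⟨t, rfl⟩
    refine ⟨uu F (t / ((MM : Matrix (Fin 2) (Fin 2) F) 0 0) ^ 2), ⟨_, rfl⟩, ?_⟩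
    rw [conj_uu MM h10]
    congr 1
    field_simp

lemma map_conj_mul {G : Type*} [Group G] (a b : G) (K : Subgroup G) :
    (K.map (MulAut.conj b).toMonoidHom).map (MulAut.conj a).toMonoidHom
      = K.map (MulAut.conj (a * b)).toMonoidHom := by
  rw [Subgroup.map_map]
  congr 1
  ext x
  simp [MulAut.conj_apply, mul_assoc]

lemma mem_map_conj_iff (kk x : Matrix.SpecialLinearGroup (Fin 2) F) :
    x ∈ (U F).map (MulAut.conj kk).toMonoidHom ↔ ∃ t, kk * uu F t * kk⁻¹ = x := by
  simp only [Subgroup.mem_map, mem_U_iff, MulEquiv.coe_toMonoidHom, MulAut.conj_apply]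
  constructor
  · rintro ⟨y, ⟨t, rfl⟩, rfl⟩
    exact ⟨t, rfl⟩
  · rintro ⟨t, rfl⟩
    exact ⟨uu F t, ⟨t, rfl⟩, rfl⟩

lemma key_scalar (a b c d e f g h t₁ t₂ t₃ : F)
    (hA : a * d - b * c = 1) (hB : e * h - f * g = 1)
    (hc : c ≠ 0) (hg : g ≠ 0) (hx : e * c - g * a ≠ 0)
    (hm : !![a, b; c, d] * !![1, t₁; 0, 1] * !![d, -b; -c, a]
        = !![1, t₂; 0, 1] * (!![e, f; g, h] * !![1, t₃; 0, 1] * !![h, -f; -g, e])) :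
    t₁ = 0 := by
  have E00 := congrFun (congrFun hm 0) 0
  have E01 := congrFun (congrFun hm 0) 1
  have E10 := congrFun (congrFun hm 1) 0
  have E11 := congrFun (congrFun hm 1) 1
  simp [Matrix.mul_apply, Fin.sum_univ_two] at E00 E01 E10 E11
  have C10 : t₁ * c ^ 2 = t₃ * g ^ 2 := by
    first
    | linear_combination E10
    | linear_combination -E10
  have C11 : t₁ * (a * c) = t₃ * (e * g) := by
    first
    | linear_combination E11 - hA + hB
    | linear_combination -E11 + hA - hB
  have C23 : t₂ * t₃ * g ^ 2 = 0 := by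
    first
    | linear_combination E00 + E11 - 2 * hA + 2 * hB
    | linear_combination -E00 - E11 + 2 * hA - 2 * hB
    | linear_combination E00 - E11
    | linear_combination E11 - E00
  have h23 : t₂ * t₃ = 0 :=
    (mul_eq_zero.mp C23).resolve_right (pow_ne_zero 2 hg)
  rcases mul_eq_zero.mp h23 with h2 | h3
  · -- t₂ = 0
    have C01 : t₁ * a ^ 2 = t₃ * e ^ 2 := by
      linear_combination E01 + (e * h - f * g + t₃ * e * g) * h2
    have hz : (t₁ * (e * c - g * a)) ^ 2 = 0 := by
      linear_combination (t₁ * e ^ 2) * C10 - (2 * t₁ * e * g) * C11 + (t₁ * g ^ 2) * C01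
    have hz' : t₁ * (e * c - g * a) = 0 := by
      exact pow_eq_zero_iff (two_ne_zero) |>.mp hz
    exact (mul_eq_zero.mp hz').resolve_right hx
  · -- t₃ = 0
    have : t₁ * c ^ 2 = 0 := by rw [C10, h3, zero_mul]
    exact (mul_eq_zero.mp this).resolve_right (pow_ne_zero 2 hc)

end Stmt15Aux



open Pointwise in
theorem stmt15 (p : ℕ) (hp : p.Prime) (F : Type*) [Field F] [Fintype F] [DecidableEq F]
    (hchar : CharP F p)
    (H : Sylow p (Matrix.SpecialLinearGroup (Fin 2) F))
    (g₁ g₂ g₃ : Matrix.SpecialLinearGroup (Fin 2) F)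
    (H₁ H₂ H₃ : Subgroup (Matrix.SpecialLinearGroup (Fin 2) F))
    (hH₁ : H₁ = (H : Subgroup _).map (MulAut.conj g₁).toMonoidHom)
    (hH₂ : H₂ = (H : Subgroup _).map (MulAut.conj g₂).toMonoidHom)
    (hH₃ : H₃ = (H : Subgroup _).map (MulAut.conj g₃).toMonoidHom)
    (h12 : H₁ ≠ H₂) (h13 : H₁ ≠ H₃) (h23 : H₂ ≠ H₃) :
    (H₁ : Set (Matrix.SpecialLinearGroup (Fin 2) F))
      ∩ ((H₂ : Set (Matrix.SpecialLinearGroup (Fin 2) F))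
          * (H₃ : Set (Matrix.SpecialLinearGroup (Fin 2) F))) = {1} := by
  haveI : Fact p.Prime := ⟨hp⟩
  classical
  obtain ⟨g0, hg0⟩ := MulAction.exists_smul_eq (Matrix.SpecialLinearGroup (Fin 2) F)
    (Stmt15Aux.USylow F p) H
  have hsmul : ∀ (w : Matrix.SpecialLinearGroup (Fin 2) F)
      (K : Subgroup (Matrix.SpecialLinearGroup (Fin 2) F)),
      MulAut.conj w • K = K.map (MulAut.conj w).toMonoidHom := by
    intro w K
    ext x
    rw [Subgroup.mem_pointwise_smul_iff_inv_smul_mem, Subgroup.mem_map_equiv]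
    rfl
  have hH0 : (H : Subgroup (Matrix.SpecialLinearGroup (Fin 2) F))
      = (Stmt15Aux.U F).map (MulAut.conj g0).toMonoidHom := by
    rw [← hg0, Sylow.coe_subgroup_smul, hsmul]
    rfl
  have hH₁' : H₁ = (Stmt15Aux.U F).map (MulAut.conj (g₁ * g0)).toMonoidHom := by
    rw [hH₁, hH0, Stmt15Aux.map_conj_mul]
  have hH₂' : H₂ = (Stmt15Aux.U F).map (MulAut.conj (g₂ * g0)).toMonoidHom := by
    rw [hH₂, hH0, Stmt15Aux.map_conj_mul]
  have hH₃' : H₃ = (Stmt15Aux.U F).map (MulAut.conj (g₃ * g0)).toMonoidHom := by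
    rw [hH₃, hH0, Stmt15Aux.map_conj_mul]
  set k₁ := g₁ * g0 with hk₁
  set k₂ := g₂ * g0 with hk₂
  set k₃ := g₃ * g0 with hk₃
  have hne : ∀ u v : Matrix.SpecialLinearGroup (Fin 2) F,
      (Stmt15Aux.U F).map (MulAut.conj u).toMonoidHom
        ≠ (Stmt15Aux.U F).map (MulAut.conj v).toMonoidHom →
      ((v⁻¹ * u : Matrix.SpecialLinearGroup (Fin 2) F) : Matrix (Fin 2) (Fin 2) F) 1 0 ≠ 0 := by
    intro u v huv h0
    apply huv
    have hconj := Stmt15Aux.conj_U_eq (v⁻¹ * u) h0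
    calc (Stmt15Aux.U F).map (MulAut.conj u).toMonoidHom
        = (Stmt15Aux.U F).map (MulAut.conj (v * (v⁻¹ * u))).toMonoidHom := by
          rw [mul_inv_cancel_left]
      _ = ((Stmt15Aux.U F).map (MulAut.conj (v⁻¹ * u)).toMonoidHom).map
            (MulAut.conj v).toMonoidHom := (Stmt15Aux.map_conj_mul _ _ _).symm
      _ = (Stmt15Aux.U F).map (MulAut.conj v).toMonoidHom := by rw [hconj]
  ext x
  simp only [Set.mem_inter_iff, Set.mem_singleton_iff]
  constructor
  · rintro ⟨hx1, hx23⟩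
    rw [SetLike.mem_coe, hH₁', Stmt15Aux.mem_map_conj_iff] at hx1
    obtain ⟨t₁, ht₁⟩ := hx1
    rw [Set.mem_mul] at hx23
    obtain ⟨y, hy, z, hz, hyz⟩ := hx23
    rw [SetLike.mem_coe, hH₂', Stmt15Aux.mem_map_conj_iff] at hy
    obtain ⟨t₂, ht₂⟩ := hy
    rw [SetLike.mem_coe, hH₃', Stmt15Aux.mem_map_conj_iff] at hz
    obtain ⟨t₃, ht₃⟩ := hz
    have hx12 : k₁ * Stmt15Aux.uu F t₁ * k₁⁻¹
        = (k₂ * Stmt15Aux.uu F t₂ * k₂⁻¹) * (k₃ * Stmt15Aux.uu F t₃ * k₃⁻¹) := by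
      rw [ht₁, ht₂, ht₃, hyz]
    set A := k₂⁻¹ * k₁ with hA
    set B := k₂⁻¹ * k₃ with hB
    have hgrp : A * Stmt15Aux.uu F t₁ * A⁻¹
        = Stmt15Aux.uu F t₂ * (B * Stmt15Aux.uu F t₃ * B⁻¹) := by
      rw [hA, hB]
      calc k₂⁻¹ * k₁ * Stmt15Aux.uu F t₁ * (k₂⁻¹ * k₁)⁻¹
          = k₂⁻¹ * (k₁ * Stmt15Aux.uu F t₁ * k₁⁻¹) * k₂ := by group
        _ = k₂⁻¹ * ((k₂ * Stmt15Aux.uu F t₂ * k₂⁻¹) * (k₃ * Stmt15Aux.uu F t₃ * k₃⁻¹)) * k₂ := by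
            rw [hx12]
        _ = Stmt15Aux.uu F t₂ * (k₂⁻¹ * k₃ * Stmt15Aux.uu F t₃ * (k₂⁻¹ * k₃)⁻¹) := by group
    set a := ((A : Matrix.SpecialLinearGroup (Fin 2) F) : Matrix (Fin 2) (Fin 2) F) 0 0 with ha
    set b := ((A : Matrix.SpecialLinearGroup (Fin 2) F) : Matrix (Fin 2) (Fin 2) F) 0 1 with hb
    set c := ((A : Matrix.SpecialLinearGroup (Fin 2) F) : Matrix (Fin 2) (Fin 2) F) 1 0 with hcdef
    set d := ((A : Matrix.SpecialLinearGroup (Fin 2) F) : Matrix (Fin 2) (Fin 2) F) 1 1 with hd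
    set e := ((B : Matrix.SpecialLinearGroup (Fin 2) F) : Matrix (Fin 2) (Fin 2) F) 0 0 with he
    set f := ((B : Matrix.SpecialLinearGroup (Fin 2) F) : Matrix (Fin 2) (Fin 2) F) 0 1 with hf
    set g := ((B : Matrix.SpecialLinearGroup (Fin 2) F) : Matrix (Fin 2) (Fin 2) F) 1 0 with hg
    set h := ((B : Matrix.SpecialLinearGroup (Fin 2) F) : Matrix (Fin 2) (Fin 2) F) 1 1 with hh
    have hAeta : ((A : Matrix.SpecialLinearGroup (Fin 2) F) : Matrix (Fin 2) (Fin 2) F)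
        = !![a, b; c, d] := Matrix.eta_fin_two _
    have hBeta : ((B : Matrix.SpecialLinearGroup (Fin 2) F) : Matrix (Fin 2) (Fin 2) F)
        = !![e, f; g, h] := Matrix.eta_fin_two _
    have hAinv : ((A⁻¹ : Matrix.SpecialLinearGroup (Fin 2) F) : Matrix (Fin 2) (Fin 2) F)
        = !![d, -b; -c, a] := by
      rw [Matrix.SpecialLinearGroup.coe_inv, hAeta, Matrix.adjugate_fin_two_of]
    have hBinv : ((B⁻¹ : Matrix.SpecialLinearGroup (Fin 2) F) : Matrix (Fin 2) (Fin 2) F)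
        = !![h, -f; -g, e] := by
      rw [Matrix.SpecialLinearGroup.coe_inv, hBeta, Matrix.adjugate_fin_two_of]
    have hdetA : a * d - b * c = 1 := by
      have := A.prop
      rwa [Matrix.det_fin_two] at this
    have hdetB : e * h - f * g = 1 := by
      have := B.prop
      rwa [Matrix.det_fin_two] at this
    have hm : !![a, b; c, d] * !![1, t₁; 0, 1] * !![d, -b; -c, a]
        = !![1, t₂; 0, 1] * (!![e, f; g, h] * !![1, t₃; 0, 1] * !![h, -f; -g, e]) := by
      have h5 := congrArg
        (fun z : Matrix.SpecialLinearGroup (Fin 2) F => (z : Matrix (Fin 2) (Fin 2) F)) hgrp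
      simpa [Matrix.SpecialLinearGroup.coe_mul, hAeta, hBeta, hAinv, hBinv] using h5
    have hc : c ≠ 0 := by
      rw [hcdef, hA]
      exact hne k₁ k₂ (by rw [← hH₁', ← hH₂']; exact h12)
    have hgne : g ≠ 0 := by
      rw [hg, hB]
      exact hne k₃ k₂ (by rw [← hH₂', ← hH₃']; exact h23.symm)
    have hx13 : e * c - g * a ≠ 0 := by
      have h6 : ((k₃⁻¹ * k₁ : Matrix.SpecialLinearGroup (Fin 2) F) :
          Matrix (Fin 2) (Fin 2) F) 1 0 = e * c - g * a := by
        have h7 : (k₃⁻¹ * k₁ : Matrix.SpecialLinearGroup (Fin 2) F) = B⁻¹ * A := by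
          rw [hA, hB]; group
        rw [h7, Matrix.SpecialLinearGroup.coe_mul, hBinv, hAeta]
        simp [Matrix.mul_apply, Fin.sum_univ_two]
        ring
      rw [← h6]
      exact hne k₁ k₃ (by rw [← hH₁', ← hH₃']; exact h13)
    have ht10 : t₁ = 0 := Stmt15Aux.key_scalar a b c d e f g h t₁ t₂ t₃
      hdetA hdetB hc hgne hx13 hm
    rw [← ht₁, ht10, Stmt15Aux.uu_zero, mul_one, mul_inv_cancel]
  · rintro rfl
    refine ⟨H₁.one_mem, ?_⟩
    rw [Set.mem_mul]
    exact ⟨1, H₂.one_mem, 1, H₃.one_mem, mul_one 1⟩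
end

section
/- Let G be a finite group and let H be a TI-subgroup of G, and let Ω be the set of right cosets of H in G with G acting by right multiplication. Then the action of G on Ω is binary if and only if for every three pairwise distinct conjugates H₁, H₂, H₃ of H in G, the intersection of H₁ with the set product H₂H₃ = {h₂h₃ : h₂ ∈ H₂, h₃ ∈ H₃} is {1}. -/
open Pointwise MulAction in
private lemma stab_coset_aux {G : Type*} [Group G] (H : Subgroup G) (x : G) :
    MulAction.stabilizer G ((x : G ⧸ H)) = H.map (MulAut.conj x).toMonoidHom := by
  have h1 : ((x : G ⧸ H)) = x • ((1 : G) : G ⧸ H) := by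
    rw [MulAction.Quotient.smul_mk, smul_eq_mul, mul_one]
  rw [h1, MulAction.stabilizer_smul_eq_stabilizer_map_conj, MulAction.stabilizer_quotient]

private lemma conj_card_aux {G : Type*} [Group G] (H : Subgroup G) (g : G) :
    Nat.card (H.map (MulAut.conj g).toMonoidHom) = Nat.card H :=
  (Nat.card_congr (MulEquiv.subgroupMap (MulAut.conj g) H).toEquiv).symm

private lemma conj_comp_aux {G : Type*} [Group G] (H : Subgroup G) (a b : G) :
    H.map (MulAut.conj b).toMonoidHom
      = (H.map (MulAut.conj (a⁻¹ * b)).toMonoidHom).map (MulAut.conj a).toMonoidHom := by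
  rw [Subgroup.map_map]
  congr 1
  ext x
  simp only [MonoidHom.comp_apply, MulEquiv.coe_toMonoidHom, MulAut.conj_apply]
  group

private lemma ti_pair_aux {G : Type*} [Group G] [Fintype G] (H : Subgroup G)
    (hTI : ∀ g : G, H ⊓ H.map (MulAut.conj g).toMonoidHom = H ∨
      H ⊓ H.map (MulAut.conj g).toMonoidHom = ⊥)
    (a b : G)
    (hne : H.map (MulAut.conj a).toMonoidHom ≠ H.map (MulAut.conj b).toMonoidHom) :
    H.map (MulAut.conj a).toMonoidHom ⊓ H.map (MulAut.conj b).toMonoidHom = ⊥ := by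
  rcases hTI (a⁻¹ * b) with h1 | h1
  · exfalso
    apply hne
    have hle : H ≤ H.map (MulAut.conj (a⁻¹ * b)).toMonoidHom := by
      conv_lhs => rw [← h1]
      exact inf_le_right
    have hcard : Nat.card (H.map (MulAut.conj (a⁻¹ * b)).toMonoidHom) ≤ Nat.card H :=
      le_of_eq (conj_card_aux H _)
    have heq : H = H.map (MulAut.conj (a⁻¹ * b)).toMonoidHom :=
      Subgroup.eq_of_le_of_card_ge hle hcard
    rw [conj_comp_aux H a b, ← heq]
  · rw [conj_comp_aux H a b, ← Subgroup.map_inf _ _ _ (MulAut.conj a).injective, h1,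
      Subgroup.map_bot]

open Pointwise in
theorem stmt17 {G : Type*} [Group G] [Fintype G] (H : Subgroup G)
    (hTI : ∀ g : G, H ⊓ H.map (MulAut.conj g).toMonoidHom = H ∨
      H ⊓ H.map (MulAut.conj g).toMonoidHom = ⊥) :
    IsBinary G (G ⧸ H) ↔
      ∀ g₁ g₂ g₃ : G,
        H.map (MulAut.conj g₁).toMonoidHom ≠ H.map (MulAut.conj g₂).toMonoidHom →
        H.map (MulAut.conj g₁).toMonoidHom ≠ H.map (MulAut.conj g₃).toMonoidHom →
        H.map (MulAut.conj g₂).toMonoidHom ≠ H.map (MulAut.conj g₃).toMonoidHom →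
        (H.map (MulAut.conj g₁).toMonoidHom : Set G)
          ∩ ((H.map (MulAut.conj g₂).toMonoidHom : Set G)
              * (H.map (MulAut.conj g₃).toMonoidHom : Set G)) = {1} := by
  have Hc : G → Subgroup G := fun g => H.map (MulAut.conj g).toMonoidHom
  constructor
  · -- binary → intersection condition
    intro hb g₁ g₂ g₃ h12 h13 h23
    ext x
    simp only [Set.mem_inter_iff, Set.mem_singleton_iff]
    constructor
    · rintro ⟨hx1, hx23⟩
      rw [Set.mem_mul] at hx23
      obtain ⟨y, hy, z, hz, rfl⟩ := hx23
      -- facts about stabilizers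
      have hx1' : (y * z) • ((g₁ : G ⧸ H)) = (g₁ : G ⧸ H) := by
        rw [← MulAction.mem_stabilizer_iff, stab_coset_aux]; exact hx1
      have hy2' : y • ((g₂ : G ⧸ H)) = (g₂ : G ⧸ H) := by
        rw [← MulAction.mem_stabilizer_iff, stab_coset_aux]; exact hy
      have hz3' : z • ((g₃ : G ⧸ H)) = (g₃ : G ⧸ H) := by
        rw [← MulAction.mem_stabilizer_iff, stab_coset_aux]; exact hz
      set I : Fin 3 → G ⧸ H := ![(g₁ : G ⧸ H), (g₂ : G ⧸ H), (g₃ : G ⧸ H)] with hI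
      set J : Fin 3 → G ⧸ H := ![(g₁ : G ⧸ H), (g₂ : G ⧸ H), y • (g₃ : G ⧸ H)] with hJ
      have rel2 : Related G 2 I J := by
        intro k hk
        have hlt : (k 0).val < (k 1).val := hk (by decide)
        have h0 : (k 0).val < 3 := (k 0).isLt
        have h1 : (k 1).val < 3 := (k 1).isLt
        have hcases : ((k 0).val = 0 ∧ (k 1).val = 1) ∨ ((k 0).val = 0 ∧ (k 1).val = 2)
            ∨ ((k 0).val = 1 ∧ (k 1).val = 2) := by omega
        rcases hcases with ⟨e0, e1⟩ | ⟨e0, e1⟩ | ⟨e0, e1⟩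
        · have e0' : k 0 = 0 := Fin.ext e0
          have e1' : k 1 = 1 := Fin.ext e1
          refine ⟨1, fun i => ?_⟩
          fin_cases i <;> simp [e0', e1', hI, hJ]
        · have e0' : k 0 = 0 := Fin.ext e0
          have e1' : k 1 = 2 := Fin.ext e1
          refine ⟨y * z, fun i => ?_⟩
          fin_cases i <;> simp [e0', e1', hI, hJ, hx1', mul_smul, hz3']
        · have e0' : k 0 = 1 := Fin.ext e0
          have e1' : k 1 = 2 := Fin.ext e1
          refine ⟨y, fun i => ?_⟩
          fin_cases i <;> simp [e0', e1', hI, hJ, hy2']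
      obtain ⟨g, hg⟩ := hb 3 (by norm_num) I J rel2 id strictMono_id
      have hg0 : g • ((g₁ : G ⧸ H)) = (g₁ : G ⧸ H) := hg 0
      have hg1 : g • ((g₂ : G ⧸ H)) = (g₂ : G ⧸ H) := hg 1
      have hg2 : g • ((g₃ : G ⧸ H)) = y • (g₃ : G ⧸ H) := hg 2
      have hgmem : g ∈ H.map (MulAut.conj g₁).toMonoidHom ⊓ H.map (MulAut.conj g₂).toMonoidHom := by
        constructor
        · rw [← stab_coset_aux]; exact MulAction.mem_stabilizer_iff.mpr hg0
        · rw [← stab_coset_aux]; exact MulAction.mem_stabilizer_iff.mpr hg1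
      rw [ti_pair_aux H hTI g₁ g₂ h12, Subgroup.mem_bot] at hgmem
      subst hgmem
      rw [one_smul] at hg2
      have hymem : y ∈ H.map (MulAut.conj g₂).toMonoidHom ⊓ H.map (MulAut.conj g₃).toMonoidHom := by
        refine ⟨hy, ?_⟩
        rw [← stab_coset_aux]
        exact MulAction.mem_stabilizer_iff.mpr hg2.symm
      rw [ti_pair_aux H hTI g₂ g₃ h23, Subgroup.mem_bot] at hymem
      subst hymem
      rw [one_mul] at hx1' ⊢
      have hzmem : z ∈ H.map (MulAut.conj g₁).toMonoidHom ⊓ H.map (MulAut.conj g₃).toMonoidHom := by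
        refine ⟨?_, hz⟩
        rw [one_mul] at hx1
        exact hx1
      rw [ti_pair_aux H hTI g₁ g₃ h13, Subgroup.mem_bot] at hzmem
      exact hzmem
    · rintro rfl
      refine ⟨Subgroup.one_mem _, ?_⟩
      rw [Set.mem_mul]
      exact ⟨1, Subgroup.one_mem _, 1, Subgroup.one_mem _, one_mul 1⟩
  · -- intersection condition → binary
    intro hyp
    -- glue lemma
    have glue : ∀ m : ℕ, ∀ ω : Fin (m + 1) → G ⧸ H, ∀ α β : G ⧸ H,
        (∀ k, ∃ g : G, g • ω k = ω k ∧ g • α = β) →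
        ∃ g : G, (∀ k, g • ω k = ω k) ∧ g • α = β := by
      intro m ω α β h
      choose g hg1 hg2 using h
      by_cases hall : ∀ k, MulAction.stabilizer G (ω k) = MulAction.stabilizer G (ω 0)
      · refine ⟨g 0, fun k => ?_, hg2 0⟩
        have : g 0 ∈ MulAction.stabilizer G (ω k) := by
          rw [hall k]
          exact MulAction.mem_stabilizer_iff.mpr (hg1 0)
        exact MulAction.mem_stabilizer_iff.mp this
      · push_neg at hall
        obtain ⟨k, hk⟩ := hall
        suffices hab : α = β by
          exact ⟨1, fun k => one_smul _ _, by rw [one_smul, hab]⟩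
        obtain ⟨u, hu⟩ := QuotientGroup.mk_surjective (ω k)
        obtain ⟨v, hv⟩ := QuotientGroup.mk_surjective (ω 0)
        obtain ⟨w, hw⟩ := QuotientGroup.mk_surjective β
        have hKu : MulAction.stabilizer G (ω k) = H.map (MulAut.conj u).toMonoidHom := by
          rw [← hu, stab_coset_aux]
        have hLv : MulAction.stabilizer G (ω 0) = H.map (MulAut.conj v).toMonoidHom := by
          rw [← hv, stab_coset_aux]
        have hMw : MulAction.stabilizer G β = H.map (MulAut.conj w).toMonoidHom := by
          rw [← hw, stab_coset_aux]
        have huv : H.map (MulAut.conj u).toMonoidHom ≠ H.map (MulAut.conj v).toMonoidHom := by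
          rw [← hKu, ← hLv]; exact hk
        have hgk : g k ∈ H.map (MulAut.conj u).toMonoidHom := by
          rw [← hKu]; exact MulAction.mem_stabilizer_iff.mpr (hg1 k)
        have hg0 : g 0 ∈ H.map (MulAut.conj v).toMonoidHom := by
          rw [← hLv]; exact MulAction.mem_stabilizer_iff.mpr (hg1 0)
        have hxβ : (g k * (g 0)⁻¹) • β = β := by
          have hα : (g 0)⁻¹ • β = α := by rw [← hg2 0, inv_smul_smul]
          rw [mul_smul, hα, hg2 k]
        by_cases hwu : H.map (MulAut.conj w).toMonoidHom = H.map (MulAut.conj u).toMonoidHom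
        · have hβ : g k • β = β := by
            apply MulAction.mem_stabilizer_iff.mp
            rw [hMw, hwu]; exact hgk
          exact smul_left_cancel (g k) ((hg2 k).trans hβ.symm)
        · by_cases hwv : H.map (MulAut.conj w).toMonoidHom = H.map (MulAut.conj v).toMonoidHom
          · have : g 0 • β = β := by
              apply MulAction.mem_stabilizer_iff.mp
              rw [hMw, hwv]; exact hg0
            exact smul_left_cancel (g 0) ((hg2 0).trans this.symm)
          · have hx1 : g k * (g 0)⁻¹ = 1 := by
              have hmem : g k * (g 0)⁻¹ ∈
                  (H.map (MulAut.conj w).toMonoidHom : Set G)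
                    ∩ ((H.map (MulAut.conj u).toMonoidHom : Set G)
                        * (H.map (MulAut.conj v).toMonoidHom : Set G)) := by
                constructor
                · rw [← hMw]; exact MulAction.mem_stabilizer_iff.mpr hxβ
                · exact Set.mul_mem_mul hgk (Subgroup.inv_mem _ hg0)
              rw [hyp w u v hwu hwv huv] at hmem
              exact hmem
            have hge : g k = g 0 := by
              have := mul_inv_eq_one.mp hx1
              exact this
            have hgk1 : g k = 1 := by
              have hmem : g k ∈ H.map (MulAut.conj u).toMonoidHom
                  ⊓ H.map (MulAut.conj v).toMonoidHom := ⟨hgk, hge ▸ hg0⟩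
              rw [ti_pair_aux H hTI u v huv, Subgroup.mem_bot] at hmem
              exact hmem
            have := hg2 k
            rw [hgk1, one_smul] at this
            exact this
    -- main induction
    have main : ∀ m : ℕ, ∀ I J : Fin (m + 2) → G ⧸ H, Related G 2 I J →
        ∃ g : G, ∀ i, g • I i = J i := by
      intro m
      induction m with
      | zero =>
        intro I J h2
        obtain ⟨g, hg⟩ := h2 id strictMono_id
        exact ⟨g, hg⟩
      | succ m ih =>
        intro I J h2
        obtain ⟨a, ha⟩ := ih (I ∘ Fin.castSucc) (J ∘ Fin.castSucc) (by
          intro k hk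
          obtain ⟨g, hg⟩ := h2 (Fin.castSucc ∘ k) (Fin.strictMono_castSucc.comp hk)
          exact ⟨g, hg⟩)
        have hpair : ∀ k : Fin (m + 2), ∃ g : G,
            g • I k.castSucc = I k.castSucc ∧ g • I (Fin.last (m + 2)) = a⁻¹ • J (Fin.last (m + 2)) := by
          intro k
          have hmono : StrictMono (![k.castSucc, Fin.last (m + 2)] : Fin 2 → Fin (m + 3)) := by
            intro i j hij
            fin_cases i <;> fin_cases j <;>
              simp_all [Fin.castSucc_lt_last]
          obtain ⟨g, hg⟩ := h2 ![k.castSucc, Fin.last (m + 2)] hmono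
          refine ⟨a⁻¹ * g, ?_, ?_⟩
          · have h0 := hg 0
            simp only [Matrix.cons_val_zero] at h0
            have ha' : a • I k.castSucc = J k.castSucc := ha k
            rw [mul_smul, h0, ← ha', inv_smul_smul]
          · have h1 := hg 1
            simp only [Matrix.cons_val_one, Matrix.head_cons, Matrix.cons_val_zero] at h1
            rw [mul_smul, h1]
        obtain ⟨h, hfix, hlast⟩ := glue (m + 1) (I ∘ Fin.castSucc) (I (Fin.last (m + 2)))
          (a⁻¹ • J (Fin.last (m + 2))) hpair
        refine ⟨a * h, fun i => ?_⟩
        refine Fin.lastCases ?_ ?_ i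
        · rw [mul_smul, hlast, smul_inv_smul]
        · intro k
          rw [mul_smul]
          have : h • I k.castSucc = I k.castSucc := hfix k
          rw [this]
          exact ha k
    intro n hn I J h2
    obtain ⟨m, rfl⟩ : ∃ m, n = m + 2 := ⟨n - 2, by omega⟩
    obtain ⟨g, hg⟩ := main m I J h2
    exact fun k hk => ⟨g, fun i => hg (k i)⟩
end
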